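/- Let C = ln 4/(ln 4 − 1). If G is a graph on n vertices with minimum degree at least δ ≥ 1, where n ≥ (C−1)δ² + (3C−1)δ + 2, then either G = K_{δ,n−δ} or i(G) < i(K_{δ,n−δ}), where i(G) = Σ_t i_t(G) is the total number of independent sets (including the empty set). -/

import Mathlib

/-- A finset of vertices is independent: no edge inside. -/
def SimpleGraph.IsIndepFinset {V : Type*} (G : SimpleGraph V) (s : Finset V) : Prop :=
  ∀ v ∈ s, ∀ w ∈ s, ¬ G.Adj v w

/-- `indepCount G t` = number of independent sets of size `t` in `G`. -/
noncomputable def indepCount {V : Type*} [Fintype V] (G : SimpleGraph V) (t : ℕ) : ℕ :=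
  Nat.card {s : Finset V // s.card = t ∧ G.IsIndepFinset s}

/-- `indepTotal G` = total number of independent sets in `G` (including ∅). -/
noncomputable def indepTotal {V : Type*} [Fintype V] (G : SimpleGraph V) : ℕ :=
  Nat.card {s : Finset V // G.IsIndepFinset s}

open Classical in
/-- The independence polynomial `P(G,x) = Σ_t i_t(G) xᵗ`. -/
noncomputable def indPoly {V : Type*} [Fintype V] (G : SimpleGraph V) (x : ℝ) : ℝ :=
  ∑ s ∈ Finset.univ.filter (fun s : Finset V => G.IsIndepFinset s), x ^ s.card

open Finset

instance decIndep {V : Type*} (G : SimpleGraph V) [DecidableRel G.Adj] :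
    DecidablePred G.IsIndepFinset := fun s => by
  unfold SimpleGraph.IsIndepFinset; infer_instance

instance decAdjCBG (α β : Type*) : DecidableRel (completeBipartiteGraph α β).Adj := fun v w => by
  simp only [completeBipartiteGraph]; infer_instance

lemma indepTotal_eq_card {V : Type*} [Fintype V] (G : SimpleGraph V) [DecidableRel G.Adj] :
    indepTotal G = (univ.filter (fun s : Finset V => G.IsIndepFinset s)).card := by
  rw [indepTotal, Nat.card_eq_fintype_card, Fintype.card_subtype]

lemma isIndep_cbg_iff {p q : ℕ} (s : Finset (Fin p ⊕ Fin q)) :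
    (completeBipartiteGraph (Fin p) (Fin q)).IsIndepFinset s ↔
      (∀ x ∈ s, x.isLeft) ∨ (∀ x ∈ s, x.isRight) := by
  constructor
  · intro h
    by_contra hc
    push_neg at hc
    obtain ⟨⟨x, hx, hxl⟩, ⟨y, hy, hyr⟩⟩ := hc
    exact h y hy x hx (Or.inl ⟨by simpa [Sum.not_isRight] using hyr,
      by simpa [Sum.not_isLeft] using hxl⟩)
  · rintro (h | h) v hv w hw hadj
    · rcases hadj with ⟨h1, h2⟩ | ⟨h1, h2⟩
      · have := h w hw; cases w <;> simp_all
      · have := h v hv; cases v <;> simp_all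
    · rcases hadj with ⟨h1, h2⟩ | ⟨h1, h2⟩
      · have := h v hv; cases v <;> simp_all
      · have := h w hw; cases w <;> simp_all

lemma indepTotal_cbg (p q : ℕ) :
    indepTotal (completeBipartiteGraph (Fin p) (Fin q)) = 2 ^ p + 2 ^ q - 1 := by
  rw [indepTotal_eq_card]
  have hL : ∀ s : Finset (Fin p ⊕ Fin q), (∀ x ∈ s, x.isLeft) ↔
      ∃ t : Finset (Fin p), t.map ⟨Sum.inl, Sum.inl_injective⟩ = s := by
    intro s
    constructor
    · intro h
      refine ⟨s.toLeft, ?_⟩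
      ext x
      cases x with
      | inl a => simp
      | inr b =>
        simp only [mem_map, Function.Embedding.coeFn_mk]
        constructor
        · rintro ⟨a, _, h⟩; exact absurd h (by simp)
        · intro hb; exact absurd (h _ hb) (by simp)
    · rintro ⟨t, rfl⟩ x hx
      simp only [mem_map, Function.Embedding.coeFn_mk] at hx
      obtain ⟨a, _, rfl⟩ := hx; simp
  have hR : ∀ s : Finset (Fin p ⊕ Fin q), (∀ x ∈ s, x.isRight) ↔
      ∃ t : Finset (Fin q), t.map ⟨Sum.inr, Sum.inr_injective⟩ = s := by
    intro s
    constructor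
    · intro h
      refine ⟨s.toRight, ?_⟩
      ext x
      cases x with
      | inr a => simp
      | inl b =>
        simp only [mem_map, Function.Embedding.coeFn_mk]
        constructor
        · rintro ⟨a, _, h⟩; exact absurd h (by simp)
        · intro hb; exact absurd (h _ hb) (by simp)
    · rintro ⟨t, rfl⟩ x hx
      simp only [mem_map, Function.Embedding.coeFn_mk] at hx
      obtain ⟨a, _, rfl⟩ := hx; simp
  classical
  set L : Finset (Finset (Fin p ⊕ Fin q)) :=
    univ.image (fun t : Finset (Fin p) => t.map ⟨Sum.inl, Sum.inl_injective⟩) with hLdef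
  set R : Finset (Finset (Fin p ⊕ Fin q)) :=
    univ.image (fun t : Finset (Fin q) => t.map ⟨Sum.inr, Sum.inr_injective⟩) with hRdef
  have hfilter : univ.filter (fun s : Finset (Fin p ⊕ Fin q) =>
      (completeBipartiteGraph (Fin p) (Fin q)).IsIndepFinset s) = L ∪ R := by
    ext s
    simp only [mem_filter, mem_univ, true_and, mem_union, hLdef, hRdef, mem_image]
    rw [isIndep_cbg_iff, hL, hR]
  rw [hfilter]
  have hcardL : L.card = 2 ^ p := by
    rw [hLdef, card_image_of_injective _ (fun a b h => Finset.map_injective _ h)]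
    simp
  have hcardR : R.card = 2 ^ q := by
    rw [hRdef, card_image_of_injective _ (fun a b h => Finset.map_injective _ h)]
    simp
  have hinter : L ∩ R = {∅} := by
    ext s
    simp only [mem_inter, mem_singleton, hLdef, hRdef, mem_image]
    constructor
    · rintro ⟨⟨t1, _, rfl⟩, ⟨t2, _, h2⟩⟩
      rw [Finset.eq_empty_iff_forall_notMem]
      intro x hx
      have hl : x.isLeft := by
        simp only [mem_map, Function.Embedding.coeFn_mk] at hx
        obtain ⟨a, _, rfl⟩ := hx; simp
      have hr : x.isRight := by
        rw [← h2] at hx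
        simp only [mem_map, Function.Embedding.coeFn_mk] at hx
        obtain ⟨a, _, rfl⟩ := hx; simp
      cases x <;> simp_all
    · rintro rfl
      refine ⟨⟨∅, mem_univ _, by simp⟩, ⟨∅, mem_univ _, by simp⟩⟩
  have := Finset.card_union_add_card_inter L R
  rw [hinter, hcardL, hcardR] at this
  simp only [card_singleton] at this
  omega

lemma log_le_div_e {x : ℝ} (hx : 0 < x) : Real.log x ≤ x / Real.exp 1 := by
  have h := Real.log_le_sub_one_of_pos (show 0 < x / Real.exp 1 by positivity)
  rw [Real.log_div hx.ne' (Real.exp_ne_zero 1), Real.log_exp] at h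
  linarith

lemma log_le_tangent_two {x : ℝ} (hx : 0 < x) : Real.log x ≤ Real.log 2 + x / 2 - 1 := by
  have h := Real.log_le_sub_one_of_pos (show 0 < x / 2 by positivity)
  rw [Real.log_div hx.ne' (by norm_num)] at h
  linarith

lemma log_factorial_ge (k : ℕ) : (k : ℝ) * Real.log k - k ≤ Real.log (k.factorial) := by
  induction k with
  | zero => simp
  | succ m ih =>
    have hfac : ((m + 1).factorial : ℝ) = (m.factorial : ℝ) * (m + 1 : ℝ) := by
      rw [Nat.factorial_succ]; push_cast; ring
    have hlog : Real.log ((m + 1).factorial) =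
        Real.log (m.factorial) + Real.log ((m : ℝ) + 1) := by
      rw [hfac, Real.log_mul (by positivity) (by positivity)]
    rcases Nat.eq_zero_or_pos m with rfl | hm
    · norm_num
    · have hm' : (0 : ℝ) < m := by exact_mod_cast hm
      have hstep : (m : ℝ) * (Real.log ((m : ℝ) + 1) - Real.log m) ≤ 1 := by
        have h1 : Real.log (((m : ℝ) + 1) / m) ≤ ((m : ℝ) + 1) / m - 1 :=
          Real.log_le_sub_one_of_pos (by positivity)
        rw [Real.log_div (by positivity) hm'.ne'] at h1
        have h2 : ((m : ℝ) + 1) / m - 1 = 1 / m := by field_simp; ring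
        rw [h2] at h1
        calc (m : ℝ) * (Real.log ((m : ℝ) + 1) - Real.log m) ≤ (m : ℝ) * (1 / m) :=
              mul_le_mul_of_nonneg_left h1 hm'.le
          _ = 1 := by field_simp
      rw [hlog]
      push_cast
      nlinarith [ih]

set_option maxHeartbeats 1000000 in
lemma nat_analytic (δ n : ℕ) (hδ : 1 ≤ δ)
    (hR : 2.588 * (δ : ℝ) ^ 2 + 9.764 * δ + 2 ≤ (n : ℝ)) :
    (δ + 2) * n.choose (δ + 1) ≤ 2 ^ (n - δ) := by
  have hδ1 : (1 : ℝ) ≤ δ := by exact_mod_cast hδ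
  have hnR : (14 : ℝ) ≤ (n : ℝ) := by nlinarith
  have hδn : δ ≤ n := by
    have : (δ : ℝ) ≤ n := by nlinarith
    exact_mod_cast this
  have hn0 : 0 < n := by
    have : (0:ℝ) < n := by linarith
    exact_mod_cast this
  obtain ⟨k, hk⟩ : ∃ k, k = δ + 1 := ⟨δ + 1, rfl⟩
  rw [← hk]
  have hkR : (k : ℝ) = (δ : ℝ) + 1 := by rw [hk]; push_cast; ring
  have hkpos : (0 : ℝ) < k := by rw [hkR]; linarith
  obtain ⟨E, hE⟩ : ∃ E, E = Real.exp 1 := ⟨_, rfl⟩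
  have hEgt : 2.718 < E := by
    have := Real.exp_one_gt_d9
    rw [hE]; linarith
  have hEpos : 0 < E := lt_trans (by norm_num) hEgt
  have hl2u : Real.log 2 < 0.6931471808 := Real.log_two_lt_d9
  have hl2l : 0.6931471803 < Real.log 2 := Real.log_two_gt_d9
  have hnpos : (0 : ℝ) < n := by linarith
  -- the log inequality
  have hlf : (k : ℝ) * Real.log k - k ≤ Real.log (k.factorial) := log_factorial_ge k
  -- log n decomposition
  have hlogn : Real.log n ≤ (n : ℝ) / (4 * (k:ℝ)^2 * E) + 2 * Real.log 2 + 2 * Real.log k := by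
    have h4k : (0:ℝ) < 4 * (k:ℝ)^2 := by positivity
    have hsplit : (n : ℝ) = ((n : ℝ) / (4 * (k:ℝ)^2)) * (4 * (k:ℝ)^2) := by field_simp
    have hlogsplit : Real.log n =
        Real.log ((n : ℝ) / (4 * (k:ℝ)^2)) + Real.log (4 * (k:ℝ)^2) := by
      rw [← Real.log_mul (by positivity) (by positivity), ← hsplit]
    have h1 : Real.log ((n : ℝ) / (4 * (k:ℝ)^2)) ≤ ((n : ℝ) / (4 * (k:ℝ)^2)) / E := by
      rw [hE]; exact log_le_div_e (by positivity)
    have h2 : Real.log (4 * (k:ℝ)^2) = 2 * Real.log 2 + 2 * Real.log k := by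
      rw [Real.log_mul (by norm_num) (by positivity), Real.log_pow]
      have : (4:ℝ) = 2^2 := by norm_num
      rw [this, Real.log_pow]
      push_cast; ring
    have h3 : ((n : ℝ) / (4 * (k:ℝ)^2)) / E = (n : ℝ) / (4 * (k:ℝ)^2 * E) := by
      field_simp
    rw [hlogsplit, h2]
    rw [h3] at h1
    linarith
  -- multiply by k
  have hklogn : (k:ℝ) * Real.log n ≤
      (n : ℝ) / (4 * (k:ℝ) * E) + 2 * (k:ℝ) * Real.log 2 + 2 * (k:ℝ) * Real.log k := by
    have h := mul_le_mul_of_nonneg_left hlogn hkpos.le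
    have heq : (k:ℝ) * ((n : ℝ) / (4 * (k:ℝ)^2 * E)) = (n : ℝ) / (4 * (k:ℝ) * E) := by
      field_simp
    have hexp2 : (k:ℝ) * ((n : ℝ) / (4 * (k:ℝ)^2 * E) + 2 * Real.log 2 + 2 * Real.log k)
        = (k:ℝ) * ((n : ℝ) / (4 * (k:ℝ)^2 * E)) + 2 * (k:ℝ) * Real.log 2
          + 2 * (k:ℝ) * Real.log k := by ring
    linarith
  have hdd : (n : ℝ) / (4 * (k:ℝ) * E) ≤ 0.0461 * n := by
    rw [div_le_iff₀ (by positivity)]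
    have hk2 : (2:ℝ) ≤ k := by rw [hkR]; linarith
    have h8 : (21.744:ℝ) ≤ 4 * (k:ℝ) * E := by
      have h1 : (4:ℝ) * 2 * 2.718 ≤ 4 * (k:ℝ) * E := by
        have h2 : (2.718:ℝ) ≤ E := hEgt.le
        have h3 : (4:ℝ) * 2 ≤ 4 * (k:ℝ) := by linarith
        have := mul_le_mul h3 h2 (by norm_num) (by positivity)
        linarith
      linarith
    have h9 := mul_le_mul_of_nonneg_left h8 hnpos.le
    nlinarith [h9]
  -- tangent bounds
  have ht1 : Real.log ((δ:ℝ) + 2) ≤ Real.log 2 + ((δ:ℝ) + 2)/2 - 1 :=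
    log_le_tangent_two (by linarith)
  have ht2 : Real.log (k:ℝ) ≤ Real.log 2 + ((k:ℝ))/2 - 1 := log_le_tangent_two hkpos
  have ht2k : (k:ℝ) * Real.log k ≤
      (k:ℝ) * Real.log 2 + (k:ℝ)^2/2 - (k:ℝ) := by
    have h := mul_le_mul_of_nonneg_left ht2 hkpos.le
    have hexp : (k:ℝ) * (Real.log 2 + ((k:ℝ))/2 - 1) = (k:ℝ) * Real.log 2 + (k:ℝ)^2/2 - (k:ℝ) := by
      ring
    linarith
  have hkRsq : (k:ℝ)^2 = (δ:ℝ)^2 + 2*δ + 1 := by rw [hkR]; ring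
  have hkl2 : (k:ℝ) * Real.log 2 = (δ:ℝ) * Real.log 2 + Real.log 2 := by rw [hkR]; ring
  have p1 : 0.69314 * (n:ℝ) ≤ (n:ℝ) * Real.log 2 := by
    have h := mul_le_mul_of_nonneg_left (le_of_lt hl2l) hnpos.le
    linarith
  have p2δ : (δ:ℝ) * Real.log 2 ≤ 0.69315 * δ := by
    have hδ0 : (0:ℝ) ≤ δ := by linarith
    have h := mul_le_mul_of_nonneg_left (le_of_lt hl2u) hδ0
    linarith
  -- the main log inequality
  have hmain : Real.log ((δ:ℝ) + 2) + (k:ℝ) * Real.log n ≤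
      Real.log (k.factorial) + ((n:ℝ) - δ) * Real.log 2 := by
    have hsq : (δ:ℝ) ≤ (δ:ℝ)^2 := by
      have h0 : (0:ℝ) ≤ δ := by linarith
      have h := mul_le_mul_of_nonneg_left hδ1 h0
      calc (δ:ℝ) = δ * 1 := by ring
        _ ≤ δ * δ := by linarith
        _ = δ^2 := by ring
    linarith [hlf, hklogn, hdd, ht1, ht2k, hkRsq, hkl2, p1, p2δ, hl2u, hl2l, hR, hsq]
  -- exponentiate
  have hmR : ((n - δ : ℕ) : ℝ) = (n : ℝ) - δ := by
    push_cast [hδn]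
    ring
  have hexp : ((δ:ℝ) + 2) * (n:ℝ)^k ≤ (k.factorial : ℝ) * 2 ^ (n - δ) := by
    have l1 : ((δ:ℝ) + 2) = Real.exp (Real.log ((δ:ℝ) + 2)) := (Real.exp_log (by linarith)).symm
    have l2 : (n:ℝ)^k = Real.exp ((k:ℝ) * Real.log n) := by
      rw [← Real.exp_log hnpos]
      rw [← Real.exp_nat_mul]
      congr 1
      rw [Real.log_exp]
    have l3 : (k.factorial : ℝ) = Real.exp (Real.log (k.factorial)) :=
      (Real.exp_log (by exact_mod_cast k.factorial_pos)).symm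
    have l4 : (2:ℝ) ^ (n - δ) = Real.exp (((n - δ : ℕ):ℝ) * Real.log 2) := by
      rw [← Real.exp_log (show (0:ℝ) < 2 by norm_num), ← Real.exp_nat_mul]
      congr 1
      rw [Real.log_exp]
    rw [l1, l2, l3, l4, ← Real.exp_add, ← Real.exp_add]
    apply Real.exp_le_exp.mpr
    rw [hmR]
    exact hmain
  -- conclude in ℕ via ℝ
  have hchoose : (n.choose k : ℝ) ≤ (n:ℝ)^k / (k.factorial : ℝ) := Nat.choose_le_pow_div k n
  have hfin : ((δ:ℝ) + 2) * (n.choose k : ℝ) ≤ (2:ℝ) ^ (n - δ) := by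
    have hfacpos : (0:ℝ) < (k.factorial : ℝ) := by exact_mod_cast k.factorial_pos
    have h1 : ((δ:ℝ) + 2) * (n.choose k : ℝ) ≤ ((δ:ℝ) + 2) * ((n:ℝ)^k / (k.factorial : ℝ)) :=
      mul_le_mul_of_nonneg_left hchoose (by linarith)
    have h2 : ((δ:ℝ) + 2) * ((n:ℝ)^k / (k.factorial : ℝ)) ≤ (2:ℝ) ^ (n - δ) := by
      rw [mul_div_assoc', div_le_iff₀ hfacpos]
      calc ((δ:ℝ) + 2) * (n:ℝ)^k ≤ (k.factorial : ℝ) * 2 ^ (n - δ) := hexp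
        _ = 2 ^ (n - δ) * (k.factorial : ℝ) := by ring
    linarith
  exact_mod_cast hfin

-- sum of (2^c - 1) over a finset is at most 2^(sum c) - 1
lemma sum_pow_sub_one_le {γ : Type*} (W : Finset γ) (c : γ → ℕ) :
    ∑ w ∈ W, (2 ^ c w - 1) ≤ 2 ^ (∑ w ∈ W, c w) - 1 := by
  classical
  induction W using Finset.induction_on with
  | empty => simp
  | insert w W' hnotmem ih =>
    rw [Finset.sum_insert hnotmem, Finset.sum_insert hnotmem, pow_add]
    have h1 : 1 ≤ 2 ^ c w := Nat.one_le_two_pow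
    have h2 : 1 ≤ 2 ^ (∑ x ∈ W', c x) := Nat.one_le_two_pow
    have hm : 2 ^ c w + 2 ^ (∑ x ∈ W', c x) ≤ 2 ^ c w * 2 ^ (∑ x ∈ W', c x) + 1 := by
      nlinarith
    generalize hX : (2:ℕ) ^ c w = X at *
    generalize hY : (2:ℕ) ^ (∑ x ∈ W', c x) = Y at *
    generalize hZ : X * Y = Z at *
    omega

-- (2^x - 1) + (2^y - 1) ≤ 2^(a-1) when x,y ≥ 1, x+y ≤ a
lemma two_pow_sub_one_add {x y a : ℕ} (hx : 1 ≤ x) (hy : 1 ≤ y) (hxy : x + y ≤ a) :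
    (2 ^ x - 1) + (2 ^ y - 1) ≤ 2 ^ (a - 1) := by
  obtain ⟨x', rfl⟩ : ∃ x', x = x' + 1 := ⟨x - 1, by omega⟩
  obtain ⟨y', rfl⟩ : ∃ y', y = y' + 1 := ⟨y - 1, by omega⟩
  have h1 : 1 ≤ 2 ^ x' := Nat.one_le_two_pow
  have h2 : 1 ≤ 2 ^ y' := Nat.one_le_two_pow
  have key : (2 ^ (x' + 1) - 1) + (2 ^ (y' + 1) - 1) ≤ 2 ^ (x' + 1 + y') := by
    have hxy' : 2 ^ (x' + 1 + y') = 2 * (2 ^ x' * 2 ^ y') := by ring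
    have hmul : 2 ^ x' + 2 ^ y' ≤ 2 ^ x' * 2 ^ y' + 1 := by nlinarith
    have e1 : 2 ^ (x' + 1) = 2 * 2 ^ x' := by ring
    have e2 : 2 ^ (y' + 1) = 2 * 2 ^ y' := by ring
    omega
  calc (2 ^ (x' + 1) - 1) + (2 ^ (y' + 1) - 1) ≤ 2 ^ (x' + 1 + y') := key
    _ ≤ 2 ^ (a - 1) := Nat.pow_le_pow_right (by norm_num) (by omega)


lemma choose_le_choose_half {n j k : ℕ} (hjk : j ≤ k) (hk : k ≤ n / 2) :
    n.choose j ≤ n.choose k := by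
  induction k with
  | zero => simp_all
  | succ m ih =>
    rcases Nat.lt_or_ge j (m + 1) with h | h
    · have : n.choose j ≤ n.choose m := ih (by omega) (by omega)
      exact this.trans (Nat.choose_le_succ_of_lt_half_left (by omega))
    · have : j = m + 1 := by omega
      subst this; exact le_refl _

section Main
variable {V : Type*} [Fintype V] [DecidableEq V] (G : SimpleGraph V) [DecidableRel G.Adj]

/-- Case 3: all independent sets have size ≤ δ+1. -/
lemma case_small (n δ : ℕ) (hcard : Fintype.card V = n) (h2δ : 2 * δ + 2 ≤ n)
    (hsmall : ∀ I : Finset V, G.IsIndepFinset I → I.card ≤ δ + 1) :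
    (univ.filter (fun s : Finset V => G.IsIndepFinset s)).card ≤ (δ + 2) * n.choose (δ + 1) := by
  have hsub : (univ.filter (fun s : Finset V => G.IsIndepFinset s)) ⊆
      (range (δ + 2)).biUnion (fun t => Finset.powersetCard t univ) := by
    intro I hI
    rw [mem_filter] at hI
    rw [mem_biUnion]
    exact ⟨I.card, mem_range.mpr (by have := hsmall I hI.2; omega),
      Finset.mem_powersetCard.mpr ⟨subset_univ I, rfl⟩⟩
  calc (univ.filter (fun s : Finset V => G.IsIndepFinset s)).card
      ≤ ((range (δ + 2)).biUnion (fun t => Finset.powersetCard t univ)).card :=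
        card_le_card hsub
    _ ≤ ∑ t ∈ range (δ + 2), (Finset.powersetCard t univ).card := card_biUnion_le
    _ = ∑ t ∈ range (δ + 2), n.choose t := by
        apply Finset.sum_congr rfl
        intro t _
        rw [Finset.card_powersetCard, card_univ, hcard]
    _ ≤ ∑ _t ∈ range (δ + 2), n.choose (δ + 1) := by
        apply Finset.sum_le_sum
        intro t ht
        have ht' := mem_range.mp ht
        exact choose_le_choose_half (by omega : t ≤ δ + 1)
          (Nat.le_div_iff_mul_le (by norm_num) |>.mpr (by omega))
    _ = (δ + 2) * n.choose (δ + 1) := by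
        rw [Finset.sum_const, card_range, smul_eq_mul]

/-- The fiber-counting bound: the number of independent sets with `I ∩ A = T` is at most
`2 ^ (B \ N(T)).card`. -/
lemma fiber_bound (A B : Finset V) (hB : B = Aᶜ) (T : Finset V)
    (hT : T ⊆ A) :
    ((univ.filter (fun s : Finset V => G.IsIndepFinset s)).filter
        (fun I => I ∩ A = T)).card ≤ 2 ^ ((B \ T.biUnion (fun u => G.neighborFinset u)).card) := by
  rw [← Finset.card_powerset]
  apply Finset.card_le_card_of_injOn (fun I => I \ A)
  · intro I hI
    simp only [Finset.mem_coe, mem_filter, mem_univ, true_and] at hI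
    obtain ⟨hind, hTA⟩ := hI
    rw [Finset.mem_coe, Finset.mem_powerset]
    intro v hv
    rw [Finset.mem_sdiff] at hv ⊢
    constructor
    · rw [hB, Finset.mem_compl]; exact hv.2
    · intro hvN
      rw [Finset.mem_biUnion] at hvN
      obtain ⟨u, huT, hvN⟩ := hvN
      have huI : u ∈ I := by
        have : u ∈ I ∩ A := hTA ▸ huT
        exact (Finset.mem_inter.mp this).1
      rw [SimpleGraph.mem_neighborFinset] at hvN
      exact hind u huI v hv.1 hvN
  · intro I₁ h₁ I₂ h₂ heq
    simp only [coe_filter, Set.mem_setOf_eq, mem_univ, true_and] at h₁ h₂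
    have heq' : I₁ \ A = I₂ \ A := heq
    ext v
    by_cases hv : v ∈ A
    · constructor
      · intro hvI
        have : v ∈ I₁ ∩ A := Finset.mem_inter.mpr ⟨hvI, hv⟩
        rw [h₁.2, ← h₂.2] at this
        exact (Finset.mem_inter.mp this).1
      · intro hvI
        have : v ∈ I₂ ∩ A := Finset.mem_inter.mpr ⟨hvI, hv⟩
        rw [h₂.2, ← h₁.2] at this
        exact (Finset.mem_inter.mp this).1
    · constructor
      · intro hvI
        have : v ∈ I₁ \ A := Finset.mem_sdiff.mpr ⟨hvI, hv⟩
        rw [heq'] at this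
        exact (Finset.mem_sdiff.mp this).1
      · intro hvI
        have : v ∈ I₂ \ A := Finset.mem_sdiff.mpr ⟨hvI, hv⟩
        rw [← heq'] at this
        exact (Finset.mem_sdiff.mp this).1

end Main

section Main2
variable {V : Type*} [Fintype V] [DecidableEq V] (G : SimpleGraph V) [DecidableRel G.Adj]

/-- neighborhoods of subsets of an independent set lie in the complement -/
lemma NT_subset (A : Finset V) (hAind : G.IsIndepFinset A) (T : Finset V) (hT : T ⊆ A) :
    T.biUnion (fun u => G.neighborFinset u) ⊆ Aᶜ := by
  intro v hv
  rw [mem_biUnion] at hv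
  obtain ⟨u, huT, hv⟩ := hv
  rw [SimpleGraph.mem_neighborFinset] at hv
  rw [Finset.mem_compl]
  intro hvA
  exact hAind u (hT huT) v hvA hv

lemma NT_card_Q (δ : ℕ) (T : Finset V) (hTne : T.Nonempty)
    (hQ : ∃ w : Finset V, w.card = δ ∧ ∀ u ∈ T, G.neighborFinset u = w) :
    δ ≤ (T.biUnion (fun u => G.neighborFinset u)).card := by
  obtain ⟨w, hwc, hw⟩ := hQ
  obtain ⟨u₀, hu₀⟩ := hTne
  have : w ⊆ T.biUnion (fun u => G.neighborFinset u) := by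
    rw [← hw u₀ hu₀]
    exact Finset.subset_biUnion_of_mem (fun u => G.neighborFinset u) hu₀
  calc δ = w.card := hwc.symm
    _ ≤ _ := card_le_card this

lemma NT_card_notQ (δ : ℕ) (hdeg : ∀ v : V, δ ≤ G.degree v) (T : Finset V) (hTne : T.Nonempty)
    (hQ : ¬ ∃ w : Finset V, w.card = δ ∧ ∀ u ∈ T, G.neighborFinset u = w) :
    δ + 1 ≤ (T.biUnion (fun u => G.neighborFinset u)).card := by
  by_contra hle
  push_neg at hle
  have hle' : (T.biUnion (fun u => G.neighborFinset u)).card ≤ δ := by omega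
  obtain ⟨u₀, hu₀⟩ := hTne
  have hall : ∀ u ∈ T, G.neighborFinset u = T.biUnion (fun u => G.neighborFinset u) := by
    intro u huT
    apply Finset.eq_of_subset_of_card_le (Finset.subset_biUnion_of_mem _ huT)
    calc (T.biUnion (fun u => G.neighborFinset u)).card ≤ δ := hle'
      _ ≤ G.degree u := hdeg u
      _ = (G.neighborFinset u).card := (G.card_neighborFinset_eq_degree u).symm
  apply hQ
  refine ⟨T.biUnion (fun u => G.neighborFinset u), ?_, hall⟩
  have h1 : δ ≤ (T.biUnion (fun u => G.neighborFinset u)).card := by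
    calc δ ≤ G.degree u₀ := hdeg u₀
      _ = (G.neighborFinset u₀).card := (G.card_neighborFinset_eq_degree u₀).symm
      _ = _ := by rw [hall u₀ hu₀]
  omega

/-- the bound on the number of nonempty `T ⊆ A` whose vertices all share a common
`δ`-neighborhood. -/
lemma M_bound (δ : ℕ) (A : Finset V) (hAne : A.Nonempty)
    (hmaxadj : ∀ s ∈ Aᶜ, ∃ u ∈ A, G.Adj u s) (hbb : δ + 1 ≤ Aᶜ.card) :
    ((A.powerset.erase ∅).filter
        (fun T => ∃ w : Finset V, w.card = δ ∧ ∀ u ∈ T, G.neighborFinset u = w)).card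
      ≤ 2 ^ (A.card - 1) := by
  set NT : Finset V → Finset V := fun T => T.biUnion (fun u => G.neighborFinset u) with hNT
  set Q : Finset V → Prop := fun T => ∃ w : Finset V, w.card = δ ∧ ∀ u ∈ T, G.neighborFinset u = w
    with hQdef
  set 𝒬 : Finset (Finset V) := (A.powerset.erase ∅).filter Q with h𝒬
  have h𝒬ne : ∀ T ∈ 𝒬, T.Nonempty ∧ T ⊆ A := by
    intro T hT
    rw [h𝒬, mem_filter, mem_erase, mem_powerset] at hT
    exact ⟨Finset.nonempty_iff_ne_empty.mpr hT.1.1, hT.1.2⟩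
  have hQNT : ∀ T ∈ 𝒬, (∀ u ∈ T, G.neighborFinset u = NT T) ∧ (NT T).card = δ := by
    intro T hT
    obtain ⟨hTne, hTA⟩ := h𝒬ne T hT
    rw [h𝒬, mem_filter] at hT
    obtain ⟨w, hwc, hw⟩ := hT.2
    have hNTw : NT T = w := by
      apply Finset.Subset.antisymm
      · intro v hv
        rw [hNT, mem_biUnion] at hv
        obtain ⟨u, huT, hv⟩ := hv
        rwa [hw u huT] at hv
      · obtain ⟨u₀, hu₀⟩ := hTne
        rw [← hw u₀ hu₀]
        exact Finset.subset_biUnion_of_mem (fun u => G.neighborFinset u) hu₀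
    constructor
    · intro u huT; rw [hNTw]; exact hw u huT
    · rw [hNTw]; exact hwc
  set W' : Finset (Finset V) := 𝒬.image NT with hW'
  have hfib : 𝒬.card = ∑ w ∈ W', (𝒬.filter (fun T => NT T = w)).card :=
    card_eq_sum_card_fiberwise (fun T hT => mem_image_of_mem NT hT)
  set P : Finset V → Finset V := fun w => A.filter (fun u => G.neighborFinset u = w) with hP
  have hfibcard : ∀ w ∈ W', (𝒬.filter (fun T => NT T = w)).card ≤ 2 ^ (P w).card - 1 := by
    intro w _
    have hsub : 𝒬.filter (fun T => NT T = w) ⊆ (P w).powerset.erase ∅ := by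
      intro T hT
      rw [mem_filter] at hT
      obtain ⟨hT𝒬, hNTw⟩ := hT
      obtain ⟨hTne, hTA⟩ := h𝒬ne T hT𝒬
      rw [mem_erase, mem_powerset]
      refine ⟨Finset.nonempty_iff_ne_empty.mp hTne, ?_⟩
      intro u huT
      rw [hP, mem_filter]
      exact ⟨hTA huT, by rw [(hQNT T hT𝒬).1 u huT, hNTw]⟩
    calc (𝒬.filter (fun T => NT T = w)).card ≤ ((P w).powerset.erase ∅).card :=
          card_le_card hsub
      _ = 2 ^ (P w).card - 1 := by
          rw [Finset.card_erase_of_mem (Finset.empty_mem_powerset _), Finset.card_powerset]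
  have hcpos : ∀ w ∈ W', 1 ≤ (P w).card := by
    intro w hw
    rw [hW', mem_image] at hw
    obtain ⟨T, hT𝒬, hNTw⟩ := hw
    obtain ⟨hTne, hTA⟩ := h𝒬ne T hT𝒬
    obtain ⟨u₀, hu₀⟩ := hTne
    have : u₀ ∈ P w := by
      rw [hP, mem_filter]
      exact ⟨hTA hu₀, by rw [(hQNT T hT𝒬).1 u₀ hu₀, hNTw]⟩
    exact Finset.card_pos.mpr ⟨u₀, this⟩
  have hdisj : ∀ w ∈ W', ∀ w' ∈ W', w ≠ w' → Disjoint (P w) (P w') := by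
    intro w _ w' _ hne
    rw [Finset.disjoint_left]
    intro u hu hu'
    rw [hP, mem_filter] at hu hu'
    exact hne (hu.2 ▸ hu'.2 ▸ rfl)
  have hcsum : ∑ w ∈ W', (P w).card ≤ A.card := by
    rw [← Finset.card_biUnion hdisj]
    apply card_le_card
    intro u hu
    rw [mem_biUnion] at hu
    obtain ⟨w, _, hu⟩ := hu
    exact (mem_filter.mp hu).1
  have hwδ : ∀ w ∈ W', w.card = δ := by
    intro w hw
    rw [hW', mem_image] at hw
    obtain ⟨T, hT𝒬, hNTw⟩ := hw
    rw [← hNTw]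
    exact (hQNT T hT𝒬).2
  rcases Nat.lt_or_ge W'.card 2 with hWlt | hWge
  · interval_cases h : W'.card
    · -- no classes: 𝒬 empty
      rw [hfib, Finset.card_eq_zero.mp h]
      simp
    · -- one class
      obtain ⟨w, hw⟩ := Finset.card_eq_one.mp h
      have hwW' : w ∈ W' := hw ▸ mem_singleton_self w
      have hPA : P w ≠ A := by
        intro hPA
        have hBw : Aᶜ ⊆ w := by
          intro s hs
          obtain ⟨u, huA, hadj⟩ := hmaxadj s hs
          have : u ∈ P w := hPA ▸ huA
          rw [hP, mem_filter] at this
          rw [← this.2, SimpleGraph.mem_neighborFinset]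
          exact hadj
        have := card_le_card hBw
        rw [hwδ w hwW'] at this
        omega
      have hlt : (P w).card < A.card := by
        apply Finset.card_lt_card
        rw [Finset.ssubset_iff_subset_ne]
        exact ⟨Finset.filter_subset _ _, hPA⟩
      have h2 : 2 ^ (P w).card ≤ 2 ^ (A.card - 1) :=
        Nat.pow_le_pow_right (by norm_num) (by omega)
      have hQc : 𝒬.card = (𝒬.filter (fun T => NT T = w)).card := by
        rw [hfib, hw, Finset.sum_singleton]
      have hf := hfibcard w hwW'
      have hg : 1 ≤ 2 ^ (P w).card := Nat.one_le_two_pow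
      omega
  · -- at least two classes
    obtain ⟨w₀, hw₀⟩ := Finset.card_pos.mp (by omega : 0 < W'.card)
    have herase_ne : (W'.erase w₀).Nonempty := by
      rw [← Finset.card_pos, Finset.card_erase_of_mem hw₀]
      omega
    obtain ⟨w₁, hw₁⟩ := herase_ne
    have hY1 : 1 ≤ ∑ w ∈ W'.erase w₀, (P w).card := by
      calc 1 ≤ (P w₁).card := hcpos w₁ (Finset.mem_of_mem_erase hw₁)
        _ ≤ ∑ w ∈ W'.erase w₀, (P w).card :=
            Finset.single_le_sum (f := fun w => (P w).card) (fun w _ => Nat.zero_le _) hw₁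
    have hsplit : ∑ w ∈ W'.erase w₀, (P w).card + (P w₀).card = ∑ w ∈ W', (P w).card :=
      Finset.sum_erase_add _ _ hw₀
    have hbound : 𝒬.card ≤ (2 ^ (P w₀).card - 1) + (2 ^ (∑ w ∈ W'.erase w₀, (P w).card) - 1) := by
      rw [hfib, ← Finset.sum_erase_add _ _ hw₀]
      have h1 : ∑ w ∈ W'.erase w₀, (𝒬.filter (fun T => NT T = w)).card
          ≤ ∑ w ∈ W'.erase w₀, (2 ^ (P w).card - 1) :=
        Finset.sum_le_sum (fun w hw => hfibcard w (Finset.mem_of_mem_erase hw))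
      have h2 := sum_pow_sub_one_le (W'.erase w₀) (fun w => (P w).card)
      have h3 := hfibcard w₀ hw₀
      omega
    calc 𝒬.card ≤ (2 ^ (P w₀).card - 1) + (2 ^ (∑ w ∈ W'.erase w₀, (P w).card) - 1) := hbound
      _ ≤ 2 ^ (A.card - 1) :=
          two_pow_sub_one_add (hcpos w₀ hw₀) hY1 (by omega)

end Main2

section Main3
variable {V : Type*} [Fintype V] [DecidableEq V] (G : SimpleGraph V) [DecidableRel G.Adj]

lemma case_main (n δ : ℕ) (hcard : Fintype.card V = n) (hdeg : ∀ v : V, δ ≤ G.degree v)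
    (A : Finset V) (hAind : G.IsIndepFinset A)
    (hmaxadj : ∀ s ∈ Aᶜ, ∃ u ∈ A, G.Adj u s)
    (hb : δ + 1 ≤ Aᶜ.card) (ha : δ + 2 ≤ A.card) :
    (univ.filter (fun s : Finset V => G.IsIndepFinset s)).card ≤ 2 ^ (n - δ) := by
  set B : Finset V := Aᶜ with hB
  set NT : Finset V → Finset V := fun T => T.biUnion (fun u => G.neighborFinset u) with hNT
  set Q : Finset V → Prop := fun T => ∃ w : Finset V, w.card = δ ∧ ∀ u ∈ T, G.neighborFinset u = w
    with hQdef
  set a : ℕ := A.card with hadef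
  set b : ℕ := B.card with hbdef
  have hab : a + b = n := by
    rw [hadef, hbdef, hB]
    rw [Finset.card_add_card_compl, hcard]
  -- fiberwise decomposition
  have hdecomp : (univ.filter (fun s : Finset V => G.IsIndepFinset s)).card =
      ∑ T ∈ A.powerset,
        ((univ.filter (fun s : Finset V => G.IsIndepFinset s)).filter (fun I => I ∩ A = T)).card :=
    card_eq_sum_card_fiberwise (fun I _ => Finset.mem_powerset.mpr Finset.inter_subset_right)
  have hstep1 : (univ.filter (fun s : Finset V => G.IsIndepFinset s)).card ≤
      ∑ T ∈ A.powerset, 2 ^ ((B \ NT T).card) := by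
    rw [hdecomp]
    exact Finset.sum_le_sum (fun T hT => fiber_bound G A B hB T (Finset.mem_powerset.mp hT))
  -- split off the empty set
  have hemptyT : (∅ : Finset V) ∈ A.powerset := Finset.empty_mem_powerset _
  have hsplit : ∑ T ∈ (A.powerset).erase ∅, 2 ^ ((B \ NT T).card) + 2 ^ ((B \ NT ∅).card)
      = ∑ T ∈ A.powerset, 2 ^ ((B \ NT T).card) :=
    Finset.sum_erase_add _ _ hemptyT
  have hNTempty : (2:ℕ) ^ ((B \ NT ∅).card) = 2 ^ b := by
    rw [hNT]
    simp [hbdef]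
  -- per-term bound on the erase-∅ part
  have hterm : ∀ T ∈ (A.powerset).erase ∅,
      2 ^ ((B \ NT T).card) ≤ if Q T then 2 ^ (b - δ) else 2 ^ (b - δ - 1) := by
    intro T hT
    rw [mem_erase, Finset.mem_powerset] at hT
    obtain ⟨hTne, hTA⟩ := hT
    have hTne' : T.Nonempty := Finset.nonempty_iff_ne_empty.mpr hTne
    have hNTB : NT T ⊆ B := by
      rw [hB]
      exact NT_subset G A hAind T hTA
    have hcard_sdiff : (B \ NT T).card = b - (NT T).card := Finset.card_sdiff_of_subset hNTB
    by_cases hQT : Q T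
    · rw [if_pos hQT]
      have hNTc : δ ≤ (NT T).card := NT_card_Q G δ T hTne' hQT
      apply Nat.pow_le_pow_right (by norm_num)
      omega
    · rw [if_neg hQT]
      have hNTc : δ + 1 ≤ (NT T).card := NT_card_notQ G δ hdeg T hTne' hQT
      apply Nat.pow_le_pow_right (by norm_num)
      omega
  have hsum2 : ∑ T ∈ (A.powerset).erase ∅, 2 ^ ((B \ NT T).card) ≤
      ∑ T ∈ (A.powerset).erase ∅, (if Q T then 2 ^ (b - δ) else 2 ^ (b - δ - 1)) :=
    Finset.sum_le_sum hterm
  -- evaluate the ite-sum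
  set M : ℕ := (((A.powerset).erase ∅).filter Q).card with hM
  have hR : (((A.powerset).erase ∅).filter (fun T => ¬ Q T)).card = (2 ^ a - 1) - M := by
    have h1 := Finset.card_filter_add_card_filter_not (s := (A.powerset).erase ∅) (p := Q)
    have h2 : ((A.powerset).erase ∅).card = 2 ^ a - 1 := by
      rw [Finset.card_erase_of_mem hemptyT, Finset.card_powerset, hadef]
    omega
  have hitesum : ∑ T ∈ (A.powerset).erase ∅, (if Q T then 2 ^ (b - δ) else 2 ^ (b - δ - 1))
      = M * 2 ^ (b - δ) + ((2 ^ a - 1) - M) * 2 ^ (b - δ - 1) := by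
    rw [Finset.sum_ite, Finset.sum_const, Finset.sum_const, hM, hR]
    simp [mul_comm, hM]
  -- the M bound
  have hMb : M ≤ 2 ^ (a - 1) := by
    rw [hM]
    exact M_bound G δ A (Finset.card_pos.mp (by omega)) hmaxadj hb
  -- final arithmetic
  obtain ⟨c, hc⟩ : ∃ c, b = δ + 1 + c := ⟨b - δ - 1, by omega⟩
  obtain ⟨d, hd⟩ : ∃ d, a = δ + 2 + d := ⟨a - δ - 2, by omega⟩
  have hnδ : n - δ = a + 1 + c := by omega
  have e1 : (2:ℕ) ^ (b - δ) = 2 * 2 ^ c := by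
    rw [show b - δ = c + 1 by omega, pow_succ]; ring
  have e2 : (2:ℕ) ^ (b - δ - 1) = 2 ^ c := by rw [show b - δ - 1 = c by omega]
  have e3 : (2:ℕ) ^ b = 2 ^ (δ + 1) * 2 ^ c := by rw [hc, pow_add]
  have e4 : (2:ℕ) ^ (n - δ) = 2 ^ (a + 1) * 2 ^ c := by rw [hnδ, show a + 1 + c = (a+1) + c by ring, pow_add]
  have coeff : 2 ^ (δ + 1) + (M * 2 + ((2 ^ a - 1) - M)) ≤ 2 ^ (a + 1) := by
    have g1 : (2:ℕ) ^ (δ + 1) ≤ 2 ^ (a - 1) := Nat.pow_le_pow_right (by norm_num) (by omega)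
    have g2 : (2:ℕ) ^ (a + 1) = 2 * 2 ^ a := by rw [pow_succ]; ring
    have g3 : (2:ℕ) ^ a = 2 * 2 ^ (a - 1) := by
      rw [← pow_succ']
      congr 1
      omega
    have g4 : 1 ≤ (2:ℕ) ^ (a - 1) := Nat.one_le_two_pow
    omega
  calc (univ.filter (fun s : Finset V => G.IsIndepFinset s)).card
      ≤ ∑ T ∈ A.powerset, 2 ^ ((B \ NT T).card) := hstep1
    _ = ∑ T ∈ (A.powerset).erase ∅, 2 ^ ((B \ NT T).card) + 2 ^ b := by
        rw [← hsplit, hNTempty]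
    _ ≤ (M * 2 ^ (b - δ) + ((2 ^ a - 1) - M) * 2 ^ (b - δ - 1)) + 2 ^ b := by
        have := hsum2.trans (le_of_eq hitesum)
        omega
    _ = (2 ^ (δ + 1) + (M * 2 + ((2 ^ a - 1) - M))) * 2 ^ c := by
        rw [e1, e2, e3]; ring
    _ ≤ 2 ^ (a + 1) * 2 ^ c := Nat.mul_le_mul_right _ coeff
    _ = 2 ^ (n - δ) := e4.symm

end Main3

section Main4
variable {V : Type*} [Fintype V] [DecidableEq V] (G : SimpleGraph V) [DecidableRel G.Adj]

lemma case_beq (n δ : ℕ) (hcard : Fintype.card V = n)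
    (A : Finset V) (hAind : G.IsIndepFinset A)
    (hNu : ∀ u ∈ A, G.neighborFinset u = Aᶜ)
    (hBdep : ¬ G.IsIndepFinset Aᶜ) (hbδ : Aᶜ.card = δ) :
    (univ.filter (fun s : Finset V => G.IsIndepFinset s)).card ≤ (2 ^ δ - 1) + (2 ^ A.card - 1) := by
  set B : Finset V := Aᶜ with hB
  have hdecomp : (univ.filter (fun s : Finset V => G.IsIndepFinset s)).card =
      ∑ T ∈ A.powerset,
        ((univ.filter (fun s : Finset V => G.IsIndepFinset s)).filter (fun I => I ∩ A = T)).card :=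
    card_eq_sum_card_fiberwise (fun I _ => Finset.mem_powerset.mpr Finset.inter_subset_right)
  have hemptyT : (∅ : Finset V) ∈ A.powerset := Finset.empty_mem_powerset _
  -- the fiber of ∅ consists of independent subsets of B, which exclude B itself
  have hfib0 : ((univ.filter (fun s : Finset V => G.IsIndepFinset s)).filter
      (fun I => I ∩ A = ∅)).card ≤ 2 ^ δ - 1 := by
    have hsub : ((univ.filter (fun s : Finset V => G.IsIndepFinset s)).filter
        (fun I => I ∩ A = ∅)) ⊆ B.powerset.erase B := by
      intro I hI
      rw [mem_filter, mem_filter] at hI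
      obtain ⟨⟨_, hind⟩, hIA⟩ := hI
      rw [mem_erase, Finset.mem_powerset]
      constructor
      · intro hIB
        exact hBdep (hIB ▸ hind)
      · intro v hv
        rw [hB, Finset.mem_compl]
        intro hvA
        have : v ∈ I ∩ A := Finset.mem_inter.mpr ⟨hv, hvA⟩
        rw [hIA] at this
        exact absurd this (Finset.notMem_empty v)
    calc _ ≤ (B.powerset.erase B).card := card_le_card hsub
      _ = 2 ^ δ - 1 := by
          rw [Finset.card_erase_of_mem (Finset.mem_powerset_self B), Finset.card_powerset, hbδ]
  -- other fibers have at most one element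
  have hfib1 : ∀ T ∈ (A.powerset).erase ∅,
      ((univ.filter (fun s : Finset V => G.IsIndepFinset s)).filter
        (fun I => I ∩ A = T)).card ≤ 1 := by
    intro T hT
    rw [mem_erase, Finset.mem_powerset] at hT
    obtain ⟨hTne, hTA⟩ := hT
    obtain ⟨u₀, hu₀⟩ := Finset.nonempty_iff_ne_empty.mpr hTne
    have hbound := fiber_bound G A B hB T hTA
    have hBNT : B \ T.biUnion (fun u => G.neighborFinset u) = ∅ := by
      rw [Finset.sdiff_eq_empty_iff_subset]
      rw [← hNu u₀ (hTA hu₀)]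
      exact Finset.subset_biUnion_of_mem (fun u => G.neighborFinset u) hu₀
    rw [hBNT] at hbound
    simpa using hbound
  calc (univ.filter (fun s : Finset V => G.IsIndepFinset s)).card
      = ∑ T ∈ (A.powerset).erase ∅,
          ((univ.filter (fun s : Finset V => G.IsIndepFinset s)).filter
            (fun I => I ∩ A = T)).card
        + ((univ.filter (fun s : Finset V => G.IsIndepFinset s)).filter
            (fun I => I ∩ A = ∅)).card := by
        rw [hdecomp, Finset.sum_erase_add _ _ hemptyT]
    _ ≤ ∑ _T ∈ (A.powerset).erase ∅, 1 + (2 ^ δ - 1) := by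
        have := Finset.sum_le_sum hfib1
        omega
    _ ≤ (2 ^ A.card - 1) + (2 ^ δ - 1) := by
        rw [Finset.sum_const, smul_eq_mul, mul_one,
          Finset.card_erase_of_mem hemptyT, Finset.card_powerset]
    _ = (2 ^ δ - 1) + (2 ^ A.card - 1) := by ring

end Main4

section Main5
variable {V : Type*} [Fintype V] [DecidableEq V] (G : SimpleGraph V) [DecidableRel G.Adj]

lemma iso_case (n δ : ℕ)
    (A : Finset V) (hAind : G.IsIndepFinset A) (hBind : G.IsIndepFinset Aᶜ)
    (hadj : ∀ u ∈ A, ∀ s ∈ Aᶜ, G.Adj u s)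
    (hbδ : Aᶜ.card = δ) (haA : A.card = n - δ) :
    Nonempty (G ≃g completeBipartiteGraph (Fin δ) (Fin (n - δ))) := by
  have eB : {x : V // x ∈ Aᶜ} ≃ Fin δ :=
    Fintype.equivFinOfCardEq (by rw [Fintype.card_coe, hbδ])
  have eA : {x : V // x ∈ A} ≃ Fin (n - δ) :=
    Fintype.equivFinOfCardEq (by rw [Fintype.card_coe, haA])
  have er : {x : V // ¬ x ∈ (Aᶜ : Finset V)} ≃ {x : V // x ∈ A} :=
    Equiv.subtypeEquivRight (by intro x; simp [Finset.mem_compl])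
  let e : V ≃ Fin δ ⊕ Fin (n - δ) :=
    ((Equiv.sumCompl (fun x : V => x ∈ (Aᶜ : Finset V))).symm).trans
      (Equiv.sumCongr eB (er.trans eA))
  have hLeft : ∀ v : V, ∀ h : v ∈ Aᶜ, ∃ i, e v = Sum.inl i := by
    intro v h
    refine ⟨eB ⟨v, h⟩, ?_⟩
    show (Equiv.sumCongr eB (er.trans eA))
      ((Equiv.sumCompl (fun x : V => x ∈ (Aᶜ : Finset V))).symm v) = _
    rw [Equiv.sumCompl_symm_apply_of_pos h]
    rfl
  have hRight : ∀ v : V, ∀ h : v ∈ A, ∃ j, e v = Sum.inr j := by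
    intro v h
    have h' : ¬ v ∈ (Aᶜ : Finset V) := by simp [Finset.mem_compl, h]
    refine ⟨(er.trans eA) ⟨v, h'⟩, ?_⟩
    show (Equiv.sumCongr eB (er.trans eA))
      ((Equiv.sumCompl (fun x : V => x ∈ (Aᶜ : Finset V))).symm v) = _
    rw [Equiv.sumCompl_symm_apply_of_neg h']
    rfl
  have hcases : ∀ v : V, v ∈ A ∨ v ∈ Aᶜ := by
    intro v
    by_cases h : v ∈ A
    · exact Or.inl h
    · exact Or.inr (Finset.mem_compl.mpr h)
  refine ⟨⟨e, ?_⟩⟩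
  intro v w
  constructor
  · -- cbg adjacency implies G adjacency
    intro hadj'
    rcases hcases v with hv | hv <;> rcases hcases w with hw | hw
    · obtain ⟨j₁, hj₁⟩ := hRight v hv
      obtain ⟨j₂, hj₂⟩ := hRight w hw
      rw [hj₁, hj₂] at hadj'
      simp [completeBipartiteGraph] at hadj'
    · exact hadj v hv w hw
    · exact (G.adj_symm (hadj w hw v hv))
    · obtain ⟨i₁, hi₁⟩ := hLeft v hv
      obtain ⟨i₂, hi₂⟩ := hLeft w hw
      rw [hi₁, hi₂] at hadj'
      simp [completeBipartiteGraph] at hadj'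
  · -- G adjacency implies cbg adjacency
    intro hGadj
    rcases hcases v with hv | hv <;> rcases hcases w with hw | hw
    · exact absurd hGadj (hAind v hv w hw)
    · obtain ⟨j₁, hj₁⟩ := hRight v hv
      obtain ⟨i₂, hi₂⟩ := hLeft w hw
      rw [hj₁, hi₂]
      simp [completeBipartiteGraph]
    · obtain ⟨i₁, hi₁⟩ := hLeft v hv
      obtain ⟨j₂, hj₂⟩ := hRight w hw
      rw [hi₁, hj₂]
      simp [completeBipartiteGraph]
    · exact absurd hGadj (hBind v hv w hw)

end Main5


theorem main_count_bound {V : Type*} [Fintype V] (G : SimpleGraph V) [DecidableRel G.Adj]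
    (n δ : ℕ) (hcard : Fintype.card V = n) (hδ : 1 ≤ δ)
    (hn : (Real.log 4 / (Real.log 4 - 1) - 1) * (δ : ℝ) ^ 2
        + (3 * (Real.log 4 / (Real.log 4 - 1)) - 1) * δ + 2 ≤ (n : ℝ))
    (hdeg : ∀ v : V, δ ≤ G.degree v) :
    Nonempty (G ≃g completeBipartiteGraph (Fin δ) (Fin (n - δ))) ∨
      indepTotal G < indepTotal (completeBipartiteGraph (Fin δ) (Fin (n - δ))) := by
  letI : DecidableEq V := Classical.decEq V
  -- numeric consequences
  have hl2u : Real.log 2 < 0.6931471808 := Real.log_two_lt_d9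
  have hl2l : 0.6931471803 < Real.log 2 := Real.log_two_gt_d9
  have hlog4 : Real.log 4 = 2 * Real.log 2 := by
    rw [show (4:ℝ) = 2^2 by norm_num, Real.log_pow]
    push_cast; ring
  have hx : Real.log 4 - 1 > 0 := by rw [hlog4]; linarith
  have hCid : Real.log 4 / (Real.log 4 - 1) - 1 = 1 / (Real.log 4 - 1) := by
    field_simp; ring
  have hCm1 : (2.588 : ℝ) ≤ Real.log 4 / (Real.log 4 - 1) - 1 := by
    rw [hCid, le_div_iff₀ hx]
    rw [hlog4]
    nlinarith
  have hδ0 : (0:ℝ) ≤ (δ:ℝ) := Nat.cast_nonneg δ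
  have hR : 2.588 * (δ:ℝ)^2 + 9.764 * (δ:ℝ) + 2 ≤ (n:ℝ) := by
    have hp1 : 2.588 * (δ:ℝ)^2 ≤ (Real.log 4 / (Real.log 4 - 1) - 1) * (δ:ℝ)^2 :=
      mul_le_mul_of_nonneg_right hCm1 (sq_nonneg _)
    have hL' : (9.764:ℝ) ≤ 3 * (Real.log 4 / (Real.log 4 - 1)) - 1 := by linarith
    have hp2 : 9.764 * (δ:ℝ) ≤ (3 * (Real.log 4 / (Real.log 4 - 1)) - 1) * (δ:ℝ) :=
      mul_le_mul_of_nonneg_right hL' hδ0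
    linarith
  have hδ1R : (1:ℝ) ≤ (δ:ℝ) := by exact_mod_cast hδ
  have h2δ2 : 2 * δ + 2 ≤ n := by
    have : (2:ℝ) * δ + 2 ≤ (n:ℝ) := by nlinarith
    exact_mod_cast this
  have hn14 : 14 ≤ n := by
    have : (14:ℝ) ≤ (n:ℝ) := by nlinarith
    exact_mod_cast this
  -- the target count
  have hiK : indepTotal (completeBipartiteGraph (Fin δ) (Fin (n - δ)))
      = 2 ^ δ + 2 ^ (n - δ) - 1 := indepTotal_cbg δ (n - δ)
  have hIG : indepTotal G = (univ.filter (fun s : Finset V => G.IsIndepFinset s)).card :=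
    indepTotal_eq_card G
  -- extract a maximum independent set
  have hfilne : (univ.filter (fun s : Finset V => G.IsIndepFinset s)).Nonempty := by
    refine ⟨∅, ?_⟩
    rw [mem_filter]
    exact ⟨mem_univ _, fun v hv => absurd hv (Finset.notMem_empty v)⟩
  obtain ⟨A, hA𝓘, hAmax⟩ := Finset.exists_max_image _ Finset.card hfilne
  have hAind : G.IsIndepFinset A := (mem_filter.mp hA𝓘).2
  have hAmax' : ∀ I : Finset V, G.IsIndepFinset I → I.card ≤ A.card := by
    intro I hI
    exact hAmax I (mem_filter.mpr ⟨mem_univ _, hI⟩)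
  -- basic facts
  have hNsub : ∀ u ∈ A, G.neighborFinset u ⊆ Aᶜ := by
    intro u hu v hv
    rw [SimpleGraph.mem_neighborFinset] at hv
    rw [Finset.mem_compl]
    intro hvA
    exact hAind u hu v hvA hv
  have hVne : 0 < Fintype.card V := by omega
  obtain ⟨v₀⟩ := Fintype.card_pos_iff.mp hVne
  have hsing : G.IsIndepFinset {v₀} := by
    intro x hx y hy
    rw [Finset.mem_singleton] at hx hy
    subst hx; subst hy
    exact G.loopless.irrefl _
  have hane : 1 ≤ A.card := by
    have := hAmax' {v₀} hsing
    simpa using this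
  have hbδge : δ ≤ Aᶜ.card := by
    obtain ⟨u₀, hu₀⟩ := Finset.card_pos.mp hane
    calc δ ≤ G.degree u₀ := hdeg u₀
      _ = (G.neighborFinset u₀).card := (G.card_neighborFinset_eq_degree u₀).symm
      _ ≤ Aᶜ.card := card_le_card (hNsub u₀ hu₀)
  have hmaxadj : ∀ s ∈ Aᶜ, ∃ u ∈ A, G.Adj u s := by
    intro s hs
    by_contra hcon
    push_neg at hcon
    have hsA : s ∉ A := Finset.mem_compl.mp hs
    have hins : G.IsIndepFinset (insert s A) := by
      intro x hx y hy hadj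
      rw [Finset.mem_insert] at hx hy
      rcases hx with rfl | hx <;> rcases hy with rfl | hy
      · exact G.loopless.irrefl _ hadj
      · exact hcon y hy (G.adj_symm hadj)
      · exact hcon x hx hadj
      · exact hAind x hx y hy hadj
    have := hAmax' _ hins
    rw [Finset.card_insert_of_notMem hsA] at this
    omega
  have hcompl : A.card + Aᶜ.card = n := by
    rw [Finset.card_add_card_compl, hcard]
  have h2pow : 2 ≤ 2 ^ δ := by
    calc 2 = 2^1 := (pow_one 2).symm
    _ ≤ 2 ^ δ := Nat.pow_le_pow_right (by norm_num) hδ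
  have h1pow : 1 ≤ 2 ^ (n - δ) := Nat.one_le_two_pow
  -- case split on b = Aᶜ.card
  rcases Nat.eq_or_lt_of_le hbδge with hbeq | hblt
  · -- b = δ
    have hNu : ∀ u ∈ A, G.neighborFinset u = Aᶜ := by
      intro u hu
      apply Finset.eq_of_subset_of_card_le (hNsub u hu)
      calc Aᶜ.card = δ := hbeq.symm
        _ ≤ G.degree u := hdeg u
        _ = (G.neighborFinset u).card := (G.card_neighborFinset_eq_degree u).symm
    have haA : A.card = n - δ := by omega
    by_cases hBind : G.IsIndepFinset Aᶜ
    · -- isomorphic to the complete bipartite graph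
      left
      apply iso_case G n δ A hAind hBind ?_ hbeq.symm haA
      intro u hu s hs
      have : s ∈ G.neighborFinset u := by rw [hNu u hu]; exact hs
      rwa [SimpleGraph.mem_neighborFinset] at this
    · -- strictly fewer independent sets
      right
      rw [hIG, hiK]
      have := case_beq G n δ hcard A hAind hNu hBind hbeq.symm
      rw [haA] at this
      omega
  · -- b ≥ δ + 1
    rcases Nat.lt_or_ge A.card (δ + 2) with halt | hage
    · -- small independence number
      right
      rw [hIG, hiK]
      have hsmall : ∀ I : Finset V, G.IsIndepFinset I → I.card ≤ δ + 1 := by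
        intro I hI
        have := hAmax' I hI
        omega
      have h1 := case_small G n δ hcard h2δ2 hsmall
      have h2 := nat_analytic δ n hδ hR
      omega
    · -- main counting case
      right
      rw [hIG, hiK]
      have h1 := case_main G n δ hcard hdeg A hAind hmaxadj (by omega) hage
      omega
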